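/- Let {C_1,…,C_k} be an (α,γ)-clustering of X, let i ≠ j, and let x, y ∈ C_i. Then d(x,y) ≤ (2/(γ−1))·Δ(x,C_j). -/

import Mathlib

open Finset

/-- `P(A)`: the probability mass of a finite set `A`. -/
noncomputable def pOf {X : Type*} (P : X → ℝ) (A : Finset X) : ℝ := ∑ x ∈ A, P x

/-- `Δ(x,A)`: the average distance from `x` to `A`,
weighted by the probability mass function `P` restricted to `A`. -/
noncomputable def Dpt {X : Type*} [MetricSpace X] (P : X → ℝ) (x : X) (A : Finset X) : ℝ :=
  (∑ y ∈ A, P y * dist x y) / pOf P A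

/-- `{C_1,…,C_k}` is an `(α,γ)`-clustering: a partition of `X` into nonempty parts, each of
probability at least `α`, such that `Δ(x,C_j) ≥ γ·Δ(x,C_i)` for all `i ≠ j` and `x ∈ C_i`. -/
def IsGoodClustering {X : Type*} [Fintype X] [MetricSpace X] (P : X → ℝ) (α γ : ℝ)
    {k : ℕ} (C : Fin k → Finset X) : Prop :=
  (∀ i, (C i).Nonempty) ∧
  (∀ i j, i ≠ j → Disjoint (C i) (C j)) ∧
  (∀ x : X, ∃ i, x ∈ C i) ∧
  (∀ i, α ≤ pOf P (C i)) ∧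
  (∀ i j, i ≠ j → ∀ x ∈ C i, γ * Dpt P x (C i) ≤ Dpt P x (C j))

lemma pOf_pos {X : Type*} (P : X → ℝ) (hP : ∀ x, 0 < P x) {A : Finset X}
    (hA : A.Nonempty) : 0 < pOf P A :=
  Finset.sum_pos (fun x _ => hP x) hA

lemma dist_le_Dpt_add {X : Type*} [MetricSpace X] (P : X → ℝ) (hP : ∀ x, 0 < P x)
    {A : Finset X} (hA : A.Nonempty) (x y : X) :
    dist x y ≤ Dpt P x A + Dpt P y A := by
  have hp := pOf_pos P hP hA
  have h : (dist x y) * pOf P A ≤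
      (∑ z ∈ A, P z * dist x z) + ∑ z ∈ A, P z * dist y z := by
    rw [pOf, Finset.mul_sum, ← Finset.sum_add_distrib]
    refine Finset.sum_le_sum fun z _ => ?_
    have := dist_triangle x z y
    have hz := (hP z).le
    nlinarith [dist_comm y z]
  rw [Dpt, Dpt, ← add_div, le_div_iff₀ hp]
  linarith

lemma Dpt_le_dist_add {X : Type*} [MetricSpace X] (P : X → ℝ) (hP : ∀ x, 0 < P x)
    {A : Finset X} (hA : A.Nonempty) (x y : X) :
    Dpt P y A ≤ dist x y + Dpt P x A := by
  have hp := pOf_pos P hP hA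
  have h : (∑ z ∈ A, P z * dist y z) ≤
      dist x y * pOf P A + ∑ z ∈ A, P z * dist x z := by
    rw [pOf, Finset.mul_sum, ← Finset.sum_add_distrib]
    refine Finset.sum_le_sum fun z _ => ?_
    have := dist_triangle y x z
    have hz := (hP z).le
    nlinarith [dist_comm y x]
  rw [Dpt, Dpt, ← sub_nonneg]
  have key : dist x y + (∑ z ∈ A, P z * dist x z) / pOf P A
      - (∑ z ∈ A, P z * dist y z) / pOf P A
      = (dist x y * pOf P A + (∑ z ∈ A, P z * dist x z)
        - ∑ z ∈ A, P z * dist y z) / pOf P A := by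
    field_simp
  rw [key]
  exact div_nonneg (by linarith) hp.le


/-- In an `(α,γ)`-clustering, for `x, y ∈ C_i` and `j ≠ i`,
`d(x,y) ≤ (2/(γ−1))·Δ(x,C_j)`. -/
theorem stmt_2 {X : Type*} [Fintype X] [MetricSpace X]
    (P : X → ℝ) (hP : ∀ x, 0 < P x) (hsum : ∑ x, P x = 1)
    (α γ : ℝ) (hα : 0 < α) (hγ : 1 < γ)
    {k : ℕ} (C : Fin k → Finset X) (hC : IsGoodClustering P α γ C)
    (i j : Fin k) (hij : i ≠ j) (x y : X) (hx : x ∈ C i) (hy : y ∈ C i) :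
    dist x y ≤ (2 / (γ - 1)) * Dpt P x (C j) := by
  obtain ⟨hne, _, _, _, hsep⟩ := hC
  have hpi := pOf_pos P hP (hne i)
  have hpj := pOf_pos P hP (hne j)
  have h1 : dist x y ≤ Dpt P x (C i) + Dpt P y (C i) :=
    dist_le_Dpt_add P hP (hne i) x y
  have h2 : γ * Dpt P x (C i) ≤ Dpt P x (C j) := hsep i j hij x hx
  have h3 : γ * Dpt P y (C i) ≤ Dpt P y (C j) := hsep i j hij y hy
  have h4 : Dpt P y (C j) ≤ dist x y + Dpt P x (C j) :=
    Dpt_le_dist_add P hP (hne j) x y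
  have hγ0 : 0 < γ - 1 := by linarith
  rw [div_mul_eq_mul_div, le_div_iff₀ hγ0]
  nlinarith
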